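/- Let λ be a partition with λ₁ = r and conjugate λ', let m ∈ ℤ_{>0}, and let N ≥ l(λ)+1. Let L be a semistandard tableau of shape λ with entries in {1,…,N}, and let M = (w₁,…,w_m) be a semistandard tableau of shape (m) with entries in {1,…,N}. Let s = (s_{ij}) ∈ T(λ,ℂ) and t = (t₁,…,t_m) ∈ T((m),ℂ). Suppose the tableau T = (⋯(L ← w₁) ← ⋯) ← w_m obtained by successive Schensted row insertions has shape λ^J for some J = {α₁ < ⋯ < α_m} ∈ H(λ,m). Then Σ_sym 1/(L^s · M^t) = Σ_sym 1/T^{u^J}, where Σ_sym denotes the sum over all permutations of the variables {t₁,…,t_r, s_{11},…,s_{λ'₂ 1}, s_{12},…,s_{λ'₂ 2}, s_{13},…,s_{λ'₃ 3}, …, s_{1r},…,s_{λ'_r r}} among their positions (the same permutation applied on both sides). -/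

import Mathlib

open scoped Classical

noncomputable section

/-- A shape function: row lengths (0-indexed), eventually zero.
A *partition* is an antitone shape. -/
structure Shape where
  part : ℕ → ℕ
  exists_zero' : ∃ n, ∀ m, n ≤ m → part m = 0

namespace Shape

lemma cells_finite (p : Shape) : {c : ℕ × ℕ | c.2 < p.part c.1}.Finite := by
  obtain ⟨n, hn⟩ := p.exists_zero'
  refine Set.Finite.subset
    ((Set.finite_Iio n).prod (Set.finite_Iio ((Finset.range n).sup p.part))) ?_
  rintro ⟨i, j⟩ hij
  simp only [Set.mem_setOf_eq] at hij
  have hi : i < n := by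
    by_contra hcon
    push_neg at hcon
    rw [hn i hcon] at hij
    omega
  exact ⟨hi, lt_of_lt_of_le hij (Finset.le_sup (Finset.mem_range.mpr hi))⟩

/-- The cells of the Young diagram `D(λ)` (0-indexed matrix coordinates). -/
def cells (p : Shape) : Finset (ℕ × ℕ) := (cells_finite p).toFinset

lemma mem_cells {p : Shape} {c : ℕ × ℕ} : c ∈ p.cells ↔ c.2 < p.part c.1 := by
  simp [cells]

lemma conj_exists (p : Shape) (j : ℕ) : ∃ n, p.part n ≤ j := by
  obtain ⟨n, hn⟩ := p.exists_zero'
  exact ⟨n, by simp [hn n le_rfl]⟩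

/-- The conjugate parts (column lengths): `conjPart p j` is the length of column `j`. -/
def conjPart (p : Shape) (j : ℕ) : ℕ := Nat.find (p.conj_exists j)

/-- The conjugate shape `λ'`. -/
def conj (p : Shape) : Shape :=
  ⟨p.conjPart, p.part 0, fun _ hm => (Nat.find_eq_zero _).mpr hm⟩

/-- The number of (nonzero) rows `l(λ)`. -/
def length (p : Shape) : ℕ := p.conjPart 0

/-- The number of cells `|λ|`. -/
def size (p : Shape) : ℕ := p.cells.card

end Shape

/-- A semistandard Young tableau of shape `p` with positive integer entries
(rows weakly increase, columns strictly increase; entries outside the shape are `0`). -/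
structure Tab (p : Shape) where
  entry : ℕ → ℕ → ℕ
  pos' : ∀ i j, j < p.part i → 0 < entry i j
  row_weak' : ∀ i j1 j2, j1 ≤ j2 → j2 < p.part i → entry i j1 ≤ entry i j2
  col_strict' : ∀ i1 i2 j, i1 < i2 → j < p.part i2 → entry i1 j < entry i2 j
  zeros' : ∀ i j, p.part i ≤ j → entry i j = 0

/-- `M^s = ∏_{(i,j) ∈ D(λ)} m_{ij}^{s_{ij}}`. -/
def Tab.pw {p : Shape} (T : Tab p) (s : ℕ × ℕ → ℂ) : ℂ :=
  ∏ c ∈ p.cells, (T.entry c.1 c.2 : ℂ) ^ s c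

/-- The Schur multiple zeta function `ζ_λ(s)`. -/
def zeta (p : Shape) (s : ℕ × ℕ → ℂ) : ℂ := ∑' T : Tab p, 1 / T.pw s

/-- The truncated Schur multiple zeta function `ζ_λ^{(N)}(s)`
(the sum over tableaux with entries in `{1,…,N}`, a finite sum). -/
def zetaTr (N : ℕ) (p : Shape) (s : ℕ × ℕ → ℂ) : ℂ :=
  ∑' T : {T : Tab p // ∀ i j, T.entry i j ≤ N}, 1 / T.1.pw s

/-- `Σ_sym`: the sum over all permutations of the variables at the positions
satisfying `P` (positions outside `P` stay fixed). -/
def symSum {V : Type} [Fintype V] [DecidableEq V] (P : V → Prop) (v : V → ℂ)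
    (F : (V → ℂ) → ℂ) : ℂ :=
  ∑ σ ∈ Finset.univ.filter (fun σ : Equiv.Perm V => ∀ x, ¬ P x → σ x = x), F (v ∘ σ)

/-- The row lengths of `λ_K`. -/
def addParts (p : Shape) (K : Finset ℕ) : ℕ → ℕ :=
  fun k => if k ∈ K then p.part k + 1 else p.part k

/-- The shape `λ_K`. -/
def shapeAdd (p : Shape) (K : Finset ℕ) : Shape :=
  ⟨addParts p K, by
    obtain ⟨n, hn⟩ := p.exists_zero'
    refine ⟨n + (K.sup id) + 1, fun m hm => ?_⟩
    have h1 : m ∉ K := by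
      intro h
      have := Finset.le_sup (f := id) h
      simp only [id] at this
      omega
    have h2 : p.part m = 0 := hn m (by omega)
    simp [addParts, h1, h2]⟩

/-- `E(λ,n)`: the sets `K` of `n` row indices such that `λ_K` is again a partition. -/
def Eset (p : Shape) (n : ℕ) : Finset (Finset ℕ) :=
  (Finset.range (p.length + n)).powerset.filter
    (fun K => K.card = n ∧ Antitone (addParts p K))

/-- `H(λ,m) = E(λ',m)`. -/
def Hset (p : Shape) (m : ℕ) : Finset (Finset ℕ) := Eset p.conj m

/-- `λ_K`. -/
def shapeE (p : Shape) (K : Finset ℕ) : Shape := shapeAdd p K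

/-- `λ^J = ((λ')_J)'`. -/
def shapeH (p : Shape) (J : Finset ℕ) : Shape := (shapeAdd p.conj J).conj

/-- The filling `u^J` of `λ^J`: `t_j` goes into box `(1, α_j)` for the `j`-th element
`α_j` of `J`, and `s_{ij}` goes into box `(i,j)` if `j ∉ J`, into box `(i+1,j)` if `j ∈ J`. -/
def pushH (J : Finset ℕ) (s : ℕ × ℕ → ℂ) (t : ℕ → ℂ) : ℕ × ℕ → ℂ :=
  fun c =>
    if c.2 ∈ J then
      if c.1 = 0 then t ((J.filter (· < c.2)).card) else s (c.1 - 1, c.2)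
    else s c

/-- The filling `u_K` of `λ_K`: `s_k` goes into box `(β_k, 1)` for the `k`-th element
`β_k` of `K`, and `t_{ij}` goes into box `(i,j)` if `i ∉ K`, into box `(i,j+1)` if `i ∈ K`. -/
def pushE (K : Finset ℕ) (s : ℕ → ℂ) (t : ℕ × ℕ → ℂ) : ℕ × ℕ → ℂ :=
  fun c =>
    if c.1 ∈ K then
      if c.2 = 0 then s ((K.filter (· < c.1)).card) else t (c.1, c.2 - 1)
    else t c

/-- The one-row shape `(m)`. -/
def rowShape (m : ℕ) : Shape :=
  ⟨fun i => if i = 0 then m else 0, 1, fun _ hk => if_neg (by omega)⟩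

/-- The one-column shape `(1^n)`. -/
def colShape (n : ℕ) : Shape :=
  ⟨fun i => if i < n then 1 else 0, n, fun _ hk => if_neg (by omega)⟩

/-- Variable positions for the `H`-type Pieri rule: the cells of `λ` (variables `s_{ij}`)
together with `m` positions for the variables `t_1, …, t_m`. -/
abbrev VH (p : Shape) (m : ℕ) := {c : ℕ × ℕ // c ∈ p.cells} ⊕ Fin m

/-- The filling `s` of `λ` extracted from an assignment of values to the variables. -/
def sfillH (p : Shape) (m : ℕ) (v : VH p m → ℂ) : ℕ × ℕ → ℂ :=
  fun c => if h : c ∈ p.cells then v (Sum.inl ⟨c, h⟩) else 0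

/-- The tuple `(t_1, …, t_m)` (0-indexed) extracted from an assignment. -/
def tfillH (p : Shape) (m : ℕ) (v : VH p m → ℂ) : ℕ → ℂ :=
  fun k => if h : k < m then v (Sum.inr ⟨k, h⟩) else 0

/-- The set of variables permuted by `Σ_sym` in the `H`-type Pieri rule:
`t_1, …, t_r` and all `s_{ij}` except `s_{λ'_2+1,1}, …, s_{λ'_1,1}`
(the first column below row `λ'_2`). -/
def PH (p : Shape) (m : ℕ) : VH p m → Prop :=
  Sum.elim (fun c => c.1.2 ≠ 0 ∨ c.1.1 < p.conjPart 1) (fun k : Fin m => (k : ℕ) < p.part 0)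

/-- Variable positions for the `E`-type Pieri rule: `n` positions for `s_1, …, s_n`
together with the cells of `λ` (variables `t_{ij}`). -/
abbrev VE (p : Shape) (n : ℕ) := Fin n ⊕ {c : ℕ × ℕ // c ∈ p.cells}

/-- The tuple `(s_1, …, s_n)` (0-indexed) extracted from an assignment. -/
def sfillE (p : Shape) (n : ℕ) (v : VE p n → ℂ) : ℕ → ℂ :=
  fun k => if h : k < n then v (Sum.inl ⟨k, h⟩) else 0

/-- The filling `t` of `λ` extracted from an assignment. -/
def tfillE (p : Shape) (n : ℕ) (v : VE p n → ℂ) : ℕ × ℕ → ℂ :=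
  fun c => if h : c ∈ p.cells then v (Sum.inr ⟨c, h⟩) else 0

/-- The set of variables permuted by `Σ_sym` in the `E`-type Pieri rule:
`s_1, …, s_s` and all `t_{ij}` except `t_{1,λ_2+1}, …, t_{1,λ_1}`
(the first row beyond column `λ_2`). -/
def PE (p : Shape) (n : ℕ) : VE p n → Prop :=
  Sum.elim (fun k : Fin n => (k : ℕ) < p.length) (fun c => c.1.1 ≠ 0 ∨ c.1.2 < p.part 1)

/-- A skew semistandard tableau of shape `l/m` (entries outside the skew shape are `0`). -/
structure SkewTab (l m : Shape) where
  entry : ℕ → ℕ → ℕ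
  pos' : ∀ i j, m.part i ≤ j → j < l.part i → 0 < entry i j
  row_weak' : ∀ i j1 j2, j1 ≤ j2 → m.part i ≤ j1 → j2 < l.part i → entry i j1 ≤ entry i j2
  col_strict' : ∀ i1 i2 j, i1 < i2 → m.part i1 ≤ j → j < l.part i2 → entry i1 j < entry i2 j
  zeros' : ∀ i j, ¬(m.part i ≤ j ∧ j < l.part i) → entry i j = 0

/-- The skew tableau `T` has weight `n`: the value `v+1` occurs `n.part v` times. -/
def SkewTab.hasWeight {l m : Shape} (T : SkewTab l m) (n : Shape) : Prop :=
  ∀ v : ℕ,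
    ((l.cells.filter (fun c => m.part c.1 ≤ c.2)).filter
      (fun c => T.entry c.1 c.2 = v + 1)).card = n.part v

/-- Row `i` of a skew tableau, read from left to right. -/
def SkewTab.rowWord {l m : Shape} (T : SkewTab l m) (i : ℕ) : List ℕ :=
  (List.range (l.part i - m.part i)).map (fun k => T.entry i (m.part i + k))

/-- The reading word: concatenate the rows starting from the bottom row. -/
def SkewTab.readingWord {l m : Shape} (T : SkewTab l m) : List ℕ :=
  ((List.range l.length).reverse.map T.rowWord).foldr (· ++ ·) []

/-- A word is Yamanouchi if every suffix contains at least as many `i`'s as `(i+1)`'s. -/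
def IsYamanouchi (w : List ℕ) : Prop :=
  ∀ j i : ℕ, (w.drop j).count (i + 2) ≤ (w.drop j).count (i + 1)

/-- The Littlewood–Richardson coefficient `c^λ_{μν}` (`lrCoeff μ ν λ`): the number of
skew semistandard tableaux of shape `λ/μ` and weight `ν` whose reading word is Yamanouchi. -/
def lrCoeff (m n l : Shape) : ℕ :=
  Nat.card {T : SkewTab l m // T.hasWeight n ∧ IsYamanouchi T.readingWord}

/-- A finset of cells which is a Young diagram. -/
def IsDiagram (C : Finset (ℕ × ℕ)) : Prop :=
  ∀ i j : ℕ, ((i + 1, j) ∈ C → (i, j) ∈ C) ∧ ((i, j + 1) ∈ C → (i, j) ∈ C)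

/-- The shape whose row lengths are the row sizes of `C`. -/
def ofCells (C : Finset (ℕ × ℕ)) : Shape :=
  ⟨fun i => (C.filter (fun c => c.1 = i)).card,
   (C.sup Prod.fst) + 1, fun k hk => by
      rw [Finset.card_eq_zero, Finset.filter_eq_empty_iff]
      intro c hc
      have := Finset.le_sup (f := Prod.fst) hc
      omega⟩

/-- Variable positions for the Littlewood–Richardson rule: the cells of `μ`
(variables `s_{ij}`) and of `ν` (variables `t_{ij}`). -/
abbrev VLR (mu nu : Shape) := {c : ℕ × ℕ // c ∈ mu.cells} ⊕ {c : ℕ × ℕ // c ∈ nu.cells}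

/-- The filling `s` of `μ` extracted from an assignment. -/
def sfillLR (mu nu : Shape) (v : VLR mu nu → ℂ) : ℕ × ℕ → ℂ :=
  fun c => if h : c ∈ mu.cells then v (Sum.inl ⟨c, h⟩) else 0

/-- The filling `t` of `ν` extracted from an assignment. -/
def tfillLR (mu nu : Shape) (v : VLR mu nu → ℂ) : ℕ × ℕ → ℂ :=
  fun c => if h : c ∈ nu.cells then v (Sum.inr ⟨c, h⟩) else 0

/-- A filling of the cells `C` by the variables, specified by a bijection
`U : C ≃ V` between the cells and the variable positions. -/
def uFill (C : Finset (ℕ × ℕ)) {V : Type} (U : {c : ℕ × ℕ // c ∈ C} ≃ V) (v : V → ℂ) :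
    ℕ × ℕ → ℂ :=
  fun c => if h : c ∈ C then v (U ⟨c, h⟩) else 0

/-- The number of entries of `T` equal to `x`. -/
def entryCount {p : Shape} (T : Tab p) (x : ℕ) : ℕ :=
  (p.cells.filter (fun c => T.entry c.1 c.2 = x)).card

/-- Schensted row insertion: `B` is the result of row-inserting the letter `w` into `A`.
The inserted values are `x 0 = w, x 1, …`; for `l < k` the value `x l` bumps the entry
at `(l, j l)`, the leftmost entry of row `l` exceeding `x l`, and finally `x k` is placed
at the end of row `k`. -/
def IsRowInsert (A : Σ p : Shape, Tab p) (w : ℕ) (B : Σ p : Shape, Tab p) : Prop :=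
  ∃ (k : ℕ) (x : ℕ → ℕ) (j : ℕ → ℕ),
    x 0 = w ∧
    (∀ l, l < k →
      j l < A.1.part l ∧
      x l < A.2.entry l (j l) ∧
      (∀ j', j' < j l → A.2.entry l j' ≤ x l) ∧
      x (l + 1) = A.2.entry l (j l)) ∧
    (∀ j', j' < A.1.part k → A.2.entry k j' ≤ x k) ∧
    B.1.part = (fun i => if i = k then A.1.part i + 1 else A.1.part i) ∧
    B.2.entry = (fun i j' =>
      if i < k ∧ j' = j i then x i
      else if i = k ∧ j' = A.1.part k then x k
      else A.2.entry i j')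

/-- Schensted column insertion: `B` is the result of column-inserting the letter `w`
into `A`. For `l < k` the value `x l` bumps the entry at `(i l, l)`, the topmost entry
of column `l` which is `≥ x l`, and finally `x k` is placed at the bottom of column `k`. -/
def IsColInsert (w : ℕ) (A : Σ p : Shape, Tab p) (B : Σ p : Shape, Tab p) : Prop :=
  ∃ (k : ℕ) (x : ℕ → ℕ) (i : ℕ → ℕ),
    x 0 = w ∧
    (∀ l, l < k →
      i l < A.1.conjPart l ∧
      x l ≤ A.2.entry (i l) l ∧
      (∀ i', i' < i l → A.2.entry i' l < x l) ∧
      x (l + 1) = A.2.entry (i l) l) ∧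
    (∀ i', i' < A.1.conjPart k → A.2.entry i' k < x k) ∧
    B.1.part = (fun r => if r = A.1.conjPart k then A.1.part r + 1 else A.1.part r) ∧
    B.2.entry = (fun r c =>
      if c < k ∧ r = i c then x c
      else if r = A.1.conjPart k ∧ c = k then x k
      else A.2.entry r c)

end
namespace PieriAux

open Finset

lemma lt_conjPart_iff {p : Shape} (hq : Antitone p.part) {i c : ℕ} :
    i < p.conjPart c ↔ c < p.part i := by
  constructor
  · intro h
    have := (Nat.lt_find_iff (p.conj_exists c) i).mp h i le_rfl
    omega
  · intro h
    rw [Shape.conjPart, Nat.lt_find_iff]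
    intro n hn hcon
    exact absurd ((hq hn).trans hcon) (not_le.mpr h)

lemma mem_cells' {p : Shape} {i c : ℕ} : (i, c) ∈ p.cells ↔ c < p.part i :=
  Shape.mem_cells

/-- Enriched anatomy of a row insertion. -/
lemma anatomy {A B : Σ p : Shape, Tab p} {w : ℕ} (h : IsRowInsert A w B) :
    ∃ (k : ℕ) (x : ℕ → ℕ) (j : ℕ → ℕ),
      x 0 = w ∧
      (∀ l, l < k →
        j l < A.1.part l ∧ x l < A.2.entry l (j l) ∧
        (∀ j', j' < j l → A.2.entry l j' ≤ x l) ∧ x (l + 1) = A.2.entry l (j l)) ∧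
      (∀ j', j' < A.1.part k → A.2.entry k j' ≤ x k) ∧
      (∀ i, B.1.part i = if i = k then A.1.part i + 1 else A.1.part i) ∧
      (∀ i j', B.2.entry i j' =
        if i < k ∧ j' = j i then x i
        else if i = k ∧ j' = A.1.part k then x k
        else A.2.entry i j') ∧
      (∀ a b, a ≤ b → b < k → j b ≤ j a) ∧
      (0 < k → A.1.part k ≤ j (k - 1)) := by
  obtain ⟨k, x, j, hx0, hpath, hterm, hBpart, hBentry⟩ := h
  have hstep : ∀ l, l + 1 < k → j (l + 1) ≤ j l := by
    intro l hl
    by_contra hgt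
    push_neg at hgt
    have h1 := hpath l (by omega)
    have h2 := hpath (l + 1) hl
    have hle := h2.2.2.1 (j l) hgt
    have hlt : j l < A.1.part (l + 1) := lt_trans hgt h2.1
    have := A.2.col_strict' l (l + 1) (j l) (Nat.lt_succ_self l) hlt
    omega
  have hanti : ∀ a b, a ≤ b → b < k → j b ≤ j a := by
    intro a b hab hbk
    induction b, hab using Nat.le_induction with
    | base => exact le_rfl
    | succ b hb ih => exact (hstep b hbk).trans (ih (by omega))
  have hend : 0 < k → A.1.part k ≤ j (k - 1) := by
    intro hk
    by_contra hcon
    push_neg at hcon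
    have h1 := hpath (k - 1) (by omega)
    have h2 := hterm (j (k - 1)) hcon
    have h3 := A.2.col_strict' (k - 1) k (j (k - 1)) (by omega) hcon
    have h4 : k - 1 + 1 = k := by omega
    rw [h4] at h1
    omega
  exact ⟨k, x, j, hx0, hpath, hterm, fun i => by rw [hBpart],
    fun i j' => by rw [hBentry], hanti, hend⟩

lemma bump_unique {f g : ℕ → ℕ} {K k : ℕ}
    (hK : ∀ i, g i = if i = K then f i + 1 else f i)
    (hk : ∀ i, g i = if i = k then f i + 1 else f i) : K = k := by
  by_contra hne
  have h1 := hK K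
  have h2 := hk K
  simp [hne] at h1 h2
  omega

lemma cells_bump {q q' : Shape} {K : ℕ}
    (hK : ∀ i, q'.part i = if i = K then q.part i + 1 else q.part i) :
    q'.cells = insert (K, q.part K) q.cells := by
  ext ⟨i, c⟩
  simp only [Shape.mem_cells, Finset.mem_insert, Prod.mk.injEq, hK i]
  by_cases hi : i = K
  · subst hi; simp; omega
  · simp [hi]

end PieriAux
namespace PieriAux

/-- The multiset of entries of a tableau. -/
noncomputable def entryM (A : Σ p : Shape, Tab p) : Multiset ℕ :=
  A.1.cells.val.map (fun c => A.2.entry c.1 c.2)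

lemma entryM_insert {A B : Σ p : Shape, Tab p} {w : ℕ} (h : IsRowInsert A w B) :
    entryM B = w ::ₘ entryM A := by
  obtain ⟨k, x, j, hx0, hpath, hterm, hBpart, hBentry, hanti, hend⟩ := anatomy h
  set S : Finset (ℕ × ℕ) := (Finset.range k).image (fun l => (l, j l)) with hS
  have hSsub : S ⊆ A.1.cells := by
    intro c hc
    simp only [hS, Finset.mem_image, Finset.mem_range] at hc
    obtain ⟨l, hl, rfl⟩ := hc
    exact mem_cells'.mpr (hpath l hl).1
  have hnew : (k, A.1.part k) ∉ A.1.cells := by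
    simp [mem_cells']
  have hcells : B.1.cells = insert (k, A.1.part k) A.1.cells := cells_bump hBpart
  have hAval : A.1.cells.val = S.val + (A.1.cells \ S).val := by
    rw [Finset.sdiff_val]
    exact (add_tsub_cancel_of_le (Finset.val_le_iff.mpr hSsub)).symm
  have hSval : S.val = (Multiset.range k).map (fun l => (l, j l)) := by
    rw [hS, Finset.image_val_of_injOn, Finset.range_val]
    intro a _ b _ hab
    exact congrArg Prod.fst hab
  have hrest : ∀ c ∈ (A.1.cells \ S).val, B.2.entry c.1 c.2 = A.2.entry c.1 c.2 := by
    rintro ⟨i, c⟩ hc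
    rw [Finset.mem_val, Finset.mem_sdiff] at hc
    rw [hBentry]
    have h1 : ¬(i < k ∧ c = j i) := by
      rintro ⟨h1, rfl⟩
      refine hc.2 ?_
      rw [hS, Finset.mem_image]
      exact ⟨i, Finset.mem_range.mpr h1, rfl⟩
    have h2 : ¬(i = k ∧ c = A.1.part k) := by
      rintro ⟨rfl, rfl⟩
      exact hnew hc.1
    rw [if_neg h1, if_neg h2]
  -- compute entryM B
  have hB : entryM B = x k ::ₘ ((Multiset.range k).map x
      + (A.1.cells \ S).val.map (fun c => A.2.entry c.1 c.2)) := by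
    rw [entryM, hcells, Finset.insert_val_of_notMem hnew, Multiset.map_cons, hAval,
      Multiset.map_add]
    congr 1
    · rw [hBentry]
      simp
    · congr 1
      · rw [hSval, Multiset.map_map]
        apply Multiset.map_congr rfl
        intro l hl
        rw [Multiset.mem_range] at hl
        simp only [Function.comp]
        rw [hBentry, if_pos ⟨hl, rfl⟩]
      · exact Multiset.map_congr rfl hrest
  have hA : entryM A = (Multiset.range k).map (fun l => x (l + 1))
      + (A.1.cells \ S).val.map (fun c => A.2.entry c.1 c.2) := by
    rw [entryM, hAval, Multiset.map_add]
    congr 1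
    rw [hSval, Multiset.map_map]
    apply Multiset.map_congr rfl
    intro l hl
    rw [Multiset.mem_range] at hl
    simp only [Function.comp]
    exact ((hpath l hl).2.2.2).symm
  rw [hB, hA]
  rw [← Multiset.cons_add, ← Multiset.cons_add]
  congr 1
  have e1 : (x k ::ₘ (Multiset.range k).map x) = (Multiset.range (k+1)).map x := by
    rw [Multiset.range_succ, Multiset.map_cons]
  have e2 : (w ::ₘ (Multiset.range k).map (fun l => x (l + 1))) = (Multiset.range (k+1)).map x := by
    have : Multiset.range (k + 1) = (0 : ℕ) ::ₘ (Multiset.range k).map Nat.succ := by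
      have := List.range_succ_eq_map (n := k)
      rw [Multiset.range, this]
      simp [Multiset.range]
    rw [this, Multiset.map_cons, Multiset.map_map, hx0]
    rfl
  rw [e1, e2]

lemma row0_preserve {A B : Σ p : Shape, Tab p} {w : ℕ} (h : IsRowInsert A w B) {c : ℕ}
    (hc : c < A.1.part 0) (hle : A.2.entry 0 c ≤ w) :
    B.2.entry 0 c = A.2.entry 0 c := by
  obtain ⟨k, x, j, hx0, hpath, hterm, hBpart, hBentry, hanti, hend⟩ := anatomy h
  rw [hBentry]
  have h1 : ¬(0 < k ∧ c = j 0) := by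
    rintro ⟨h1, rfl⟩
    have := (hpath 0 h1).2.1
    omega
  rw [if_neg h1, if_neg]
  rintro ⟨h2, h3⟩
  rw [← h2] at h3
  omega

lemma row0_new {A B : Σ p : Shape, Tab p} {w : ℕ} (h : IsRowInsert A w B)
    (hb : B.1.part 0 = A.1.part 0 + 1) :
    B.2.entry 0 (A.1.part 0) = w := by
  obtain ⟨k, x, j, hx0, hpath, hterm, hBpart, hBentry, hanti, hend⟩ := anatomy h
  have hk : k = 0 := by
    have := hBpart 0
    by_cases h0 : (0:ℕ) = k
    · omega
    · rw [if_neg h0] at this; omega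
  subst hk
  rw [hBentry]
  simp [hx0]

lemma col0_preserve {A B : Σ p : Shape, Tab p} {w : ℕ} (h : IsRowInsert A w B) {K : ℕ}
    (hK : ∀ i, B.1.part i = if i = K then A.1.part i + 1 else A.1.part i)
    (hcol : 1 ≤ A.1.part K) (i : ℕ) :
    B.2.entry i 0 = A.2.entry i 0 := by
  obtain ⟨k, x, j, hx0, hpath, hterm, hBpart, hBentry, hanti, hend⟩ := anatomy h
  have hKk : K = k := bump_unique hK hBpart
  subst hKk
  have hj : ∀ l, l < K → j l ≠ 0 := by
    intro l hl hcon
    have h1 : j (K - 1) ≤ j l := hanti l (K - 1) (by omega) (by omega)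
    have h2 := hend (by omega)
    omega
  rw [hBentry]
  have h1 : ¬(i < K ∧ (0:ℕ) = j i) := by
    rintro ⟨h1, h2⟩
    exact hj i h1 h2.symm
  have h2 : ¬(i = K ∧ (0:ℕ) = A.1.part K) := by
    rintro ⟨rfl, h2⟩
    omega
  rw [if_neg h1, if_neg h2]

lemma col0_shift {A B : Σ p : Shape, Tab p} {w : ℕ} (h : IsRowInsert A w B) {K : ℕ}
    (hK : ∀ i, B.1.part i = if i = K then A.1.part i + 1 else A.1.part i)
    (hcol : A.1.part K = 0) :
    ∃ l₀, l₀ ≤ K ∧ (l₀ = 0 ∨ 2 ≤ A.1.part (l₀ - 1)) ∧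
      (∀ i, i < l₀ → B.2.entry i 0 = A.2.entry i 0) ∧
      (∀ i, l₀ ≤ i → i < K → B.2.entry (i + 1) 0 = A.2.entry i 0) := by
  obtain ⟨k, x, j, hx0, hpath, hterm, hBpart, hBentry, hanti, hend⟩ := anatomy h
  have hKk : K = k := bump_unique hK hBpart
  subst hKk
  by_cases hex : ∃ l, l < K ∧ j l = 0
  · obtain ⟨hl₀k, hjl₀⟩ := Nat.find_spec hex
    have hmin : ∀ l, l < Nat.find hex → j l ≠ 0 := by
      intro l hl hcon
      exact Nat.find_min hex hl ⟨by omega, hcon⟩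
    refine ⟨Nat.find hex, by omega, ?_, ?_, ?_⟩
    · rcases Nat.eq_zero_or_pos (Nat.find hex) with h0 | h0
      · exact Or.inl h0
      · refine Or.inr ?_
        have h1 := (hpath (Nat.find hex - 1) (by omega)).1
        have h2 := hmin (Nat.find hex - 1) (by omega)
        omega
    · intro i hi
      rw [hBentry, if_neg, if_neg]
      · rintro ⟨rfl, h2⟩; omega
      · rintro ⟨h1, h2⟩; exact hmin i hi h2.symm
    · intro i hli hik
      have hji : j i = 0 := by
        have h6 := hanti (Nat.find hex) i hli (by omega)
        rw [hjl₀] at h6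
        omega
      rcases Nat.lt_or_ge (i + 1) K with hik1 | hik1
      · have hji1 : j (i + 1) = 0 := by
          have h6 := hanti (Nat.find hex) (i + 1) (by omega) hik1
          rw [hjl₀] at h6
          omega
        rw [hBentry, if_pos ⟨hik1, hji1.symm⟩]
        have := (hpath i hik).2.2.2
        rw [this, hji]
      · have hik1 : i + 1 = K := by omega
        rw [hBentry, if_neg (by omega), if_pos ⟨hik1, hcol.symm⟩]
        have h5 := (hpath i hik).2.2.2
        rw [hji] at h5
        rw [← hik1, h5]
  · push_neg at hex
    refine ⟨K, le_rfl, ?_, ?_, fun i h1 h2 => by omega⟩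
    · rcases Nat.eq_zero_or_pos K with h0 | h0
      · exact Or.inl h0
      · refine Or.inr ?_
        have h1 := (hpath (K - 1) (by omega)).1
        have h2 := hex (K - 1) (by omega)
        have h3 := hend h0
        omega
    · intro i hi
      rw [hBentry, if_neg, if_neg]
      · rintro ⟨rfl, h2⟩; omega
      · rintro ⟨h1, h2⟩; exact hex i h1 h2.symm

end PieriAux
namespace PieriAux

/-- The row-bumping lemma: inserting `w ≤ w'` successively, the second new box is in a
strictly larger column. -/
lemma bump_lt {A B C : Σ p : Shape, Tab p} {w w' : ℕ}
    (h1 : IsRowInsert A w B) (h2 : IsRowInsert B w' C) (hw : w ≤ w')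
    {K1 K2 : ℕ}
    (hK1 : ∀ i, B.1.part i = if i = K1 then A.1.part i + 1 else A.1.part i)
    (hK2 : ∀ i, C.1.part i = if i = K2 then B.1.part i + 1 else B.1.part i) :
    A.1.part K1 < B.1.part K2 := by
  obtain ⟨k, x, j, hx0, hpath, hterm, hBpart, hBentry, hanti, hend⟩ := anatomy h1
  obtain ⟨k', x', j', hx0', hpath', hterm', hCpart, hCentry, hanti', hend'⟩ := anatomy h2
  have e1 : K1 = k := bump_unique hK1 hBpart
  have e2 : K2 = k' := bump_unique hK2 hCpart
  subst e1
  subst e2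
  have hBrow : ∀ c, c < B.1.part K1 → B.2.entry K1 c ≤ x K1 := by
    intro c hc
    rw [hBpart, if_pos rfl] at hc
    rw [hBentry, if_neg (by omega)]
    by_cases hc2 : c = A.1.part K1
    · rw [if_pos ⟨rfl, hc2⟩]
    · rw [if_neg (fun hh => hc2 hh.2)]
      exact hterm c (by omega)
  have hstep : ∀ l, l ≤ K1 → l < K2 → x l ≤ x' l → l < K1 ∧ j l < j' l := by
    intro l hlK1 hlK2 hxle
    have hlt : l < K1 := by
      rcases Nat.lt_or_ge l K1 with h | h
      · exact h
      · exfalso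
        have hl : l = K1 := by omega
        subst hl
        have hb := hpath' l hlK2
        exact absurd hb.2.1 (not_lt.mpr ((hBrow (j' l) hb.1).trans hxle))
    have hbl := hpath' l hlK2
    have hBjl : B.2.entry l (j l) = x l := by rw [hBentry, if_pos ⟨hlt, rfl⟩]
    have hne : j' l ≠ j l := by
      intro hh
      rw [hh, hBjl] at hbl
      have := hbl.2.1
      omega
    have hgt : j l < j' l := by
      rcases Nat.lt_or_ge (j l) (j' l) with h | h
      · exact h
      · exfalso
        have hlt2 : j' l < j l := by omega
        have hB2 : B.2.entry l (j' l) = A.2.entry l (j' l) := by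
          rw [hBentry, if_neg (by tauto), if_neg (by omega)]
        have h3 := (hpath l hlt).2.2.1 (j' l) hlt2
        have h4 := hbl.2.1
        rw [hB2] at h4
        omega
    exact ⟨hlt, hgt⟩
  have main : ∀ l, l ≤ K1 → l ≤ K2 → x l ≤ x' l := by
    intro l
    induction l with
    | zero => intro _ _; rw [hx0, hx0']; exact hw
    | succ n ih =>
      intro hn1 hn2
      have ihn := ih (by omega) (by omega)
      obtain ⟨hlt, hgt⟩ := hstep n (by omega) (by omega) ihn
      have hbn := hpath' n (by omega)
      have han := hpath n hlt
      have hj'lt : j' n < A.1.part n := by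
        have h5 := hbn.1
        rw [hBpart, if_neg (by omega)] at h5
        exact h5
      have hBval : B.2.entry n (j' n) = A.2.entry n (j' n) := by
        rw [hBentry, if_neg (by omega), if_neg (by omega)]
      have hmono := A.2.row_weak' n (j n) (j' n) (le_of_lt hgt) hj'lt
      rw [han.2.2.2, hbn.2.2.2, hBval]
      exact hmono
  rcases Nat.lt_trichotomy K2 K1 with hlt | heq | hgt
  · have h1' : j K2 < A.1.part K2 := (hpath K2 hlt).1
    have h2' : j (K1 - 1) ≤ j K2 := hanti K2 (K1 - 1) (by omega) (by omega)
    have h3' := hend (by omega)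
    have h4' : B.1.part K2 = A.1.part K2 := by rw [hBpart, if_neg (by omega)]
    omega
  · subst heq
    rw [hBpart, if_pos rfl]
    omega
  · exfalso
    have hx := main K1 le_rfl (by omega)
    obtain ⟨hc, _⟩ := hstep K1 le_rfl hgt hx
    omega

end PieriAux
namespace PieriAux

open Finset

lemma exists_perm_comp {V : Type} [Fintype V] [DecidableEq V] (P : V → Prop)
    (f g : V → ℕ) (hfix : ∀ x, ¬ P x → f x = g x)
    (hcount : ∀ n, (Finset.univ.filter fun x => f x = n).card
                 = (Finset.univ.filter fun x => g x = n).card) :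
    ∃ τ : Equiv.Perm V, (∀ x, ¬ P x → τ x = x) ∧ ∀ x, f x = g (τ x) := by
  classical
  set F : {x // P x} → ℕ := fun y => f y.1 with hF
  set G : {x // P x} → ℕ := fun y => g y.1 with hG
  have cardeq : ∀ n : ℕ, Fintype.card {y : {x // P x} // F y = n}
      = Fintype.card {y : {x // P x} // G y = n} := by
    intro n
    have eF : Fintype.card {y : {x // P x} // F y = n}
        = (Finset.univ.filter fun x => P x ∧ f x = n).card := by
      rw [← Fintype.card_subtype]
      exact Fintype.card_congr (Equiv.subtypeSubtypeEquivSubtypeInter P (fun x => f x = n))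
    have eG : Fintype.card {y : {x // P x} // G y = n}
        = (Finset.univ.filter fun x => P x ∧ g x = n).card := by
      rw [← Fintype.card_subtype]
      exact Fintype.card_congr (Equiv.subtypeSubtypeEquivSubtypeInter P (fun x => g x = n))
    rw [eF, eG]
    have splitf : (Finset.univ.filter fun x => f x = n).card
        = (Finset.univ.filter fun x => P x ∧ f x = n).card
          + (Finset.univ.filter fun x => ¬ P x ∧ f x = n).card := by
      rw [← Finset.card_union_of_disjoint]
      · congr 1
        ext y
        simp only [Finset.mem_filter, Finset.mem_union]
        tauto
      · rw [Finset.disjoint_filter]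
        tauto
    have splitg : (Finset.univ.filter fun x => g x = n).card
        = (Finset.univ.filter fun x => P x ∧ g x = n).card
          + (Finset.univ.filter fun x => ¬ P x ∧ g x = n).card := by
      rw [← Finset.card_union_of_disjoint]
      · congr 1
        ext y
        simp only [Finset.mem_filter, Finset.mem_union]
        tauto
      · rw [Finset.disjoint_filter]
        tauto
    have hsame : (Finset.univ.filter fun x => ¬ P x ∧ f x = n)
        = (Finset.univ.filter fun x => ¬ P x ∧ g x = n) := by
      ext y
      simp only [Finset.mem_filter]
      constructor
      · rintro ⟨h1, h2, h3⟩; exact ⟨h1, h2, by rw [← hfix y h2]; exact h3⟩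
      · rintro ⟨h1, h2, h3⟩; exact ⟨h1, h2, by rw [hfix y h2]; exact h3⟩
    have := hcount n
    rw [splitf, splitg, hsame] at this
    omega
  set e : ∀ n : ℕ, {y : {x // P x} // F y = n} ≃ {y : {x // P x} // G y = n} :=
    fun n => Fintype.equivOfCardEq (cardeq n) with he
  set σ : Equiv.Perm {x // P x} :=
    (Equiv.sigmaFiberEquiv F).symm.trans
      ((Equiv.sigmaCongrRight e).trans (Equiv.sigmaFiberEquiv G)) with hσ
  have hσval : ∀ y : {x // P x}, G (σ y) = F y := by
    intro y
    have : σ y = ((e (F y)) ⟨y, rfl⟩).1 := rfl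
    rw [this]
    exact ((e (F y)) ⟨y, rfl⟩).2
  refine ⟨Equiv.Perm.ofSubtype σ, ?_, ?_⟩
  · intro x hx
    exact Equiv.Perm.ofSubtype_apply_of_not_mem σ hx
  · intro x
    by_cases hx : P x
    · rw [Equiv.Perm.ofSubtype_apply_of_mem σ hx]
      exact (hσval ⟨x, hx⟩).symm
    · rw [Equiv.Perm.ofSubtype_apply_of_not_mem σ hx]
      exact hfix x hx

lemma symSum_comp {V : Type} [Fintype V] [DecidableEq V] (P : V → Prop) (v : V → ℂ)
    (F : (V → ℂ) → ℂ) (τ : Equiv.Perm V) (hτ : ∀ x, ¬ P x → τ x = x) :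
    symSum P v (fun w => F (w ∘ τ)) = symSum P v F := by
  classical
  rw [symSum, symSum]
  have hτinv : ∀ x, ¬ P x → τ⁻¹ x = x := by
    intro x hx
    have : τ (τ⁻¹ x) = τ x := by rw [hτ x hx]; exact τ.apply_symm_apply x
    exact τ.injective this
  refine Finset.sum_bij' (fun σ _ => σ * τ) (fun σ _ => σ * τ⁻¹) ?_ ?_ ?_ ?_ ?_
  · intro σ hσ
    rw [Finset.mem_filter] at hσ ⊢
    refine ⟨Finset.mem_univ _, fun x hx => ?_⟩
    have : (σ * τ) x = σ (τ x) := rfl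
    rw [this, hτ x hx, hσ.2 x hx]
  · intro σ hσ
    rw [Finset.mem_filter] at hσ ⊢
    refine ⟨Finset.mem_univ _, fun x hx => ?_⟩
    have : (σ * τ⁻¹) x = σ (τ⁻¹ x) := rfl
    rw [this, hτinv x hx, hσ.2 x hx]
  · intro σ _
    group
  · intro σ _
    group
  · intro σ _
    congr 1
end PieriAux
namespace PieriAux

open Finset

lemma count_map_finset {α : Type u_1} [DecidableEq α] (s : Finset α) (f : α → ℕ) (n : ℕ) :
    Multiset.count n (s.val.map f) = (s.filter (fun a => f a = n)).card := by
  classical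
  rw [Multiset.count_map, Finset.card_def, Finset.filter_val]
  exact (congrArg Multiset.card (Multiset.filter_congr (fun x _ => eq_comm))).symm

lemma fin_filter_card {m : ℕ} (k : Fin m) :
    (Finset.univ.filter fun i : Fin m => i < k).card = (k : ℕ) := by
  have : (Finset.univ.filter fun i : Fin m => i < k) = Finset.Iio k := by
    ext i; simp
  rw [this, Fin.card_Iio]

end PieriAux
open PieriAux

/-- **Lemma 4.6** (key lemma for the `H`-type Pieri formula).
If row-inserting the letters `w_1, …, w_m` of the one-row tableau `M` into `L`
produces a tableau `T` of shape `λ^J` with `J ∈ H(λ,m)`, then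
`Σ_sym 1/(L^s M^t) = Σ_sym 1/T^{u^J}`. -/
theorem row_insert_term_sum
    (p : Shape) (hpart : Antitone p.part) (r m N : ℕ) (hr : p.part 0 = r) (hm : 0 < m)
    (hN : p.length + 1 ≤ N)
    (L : Tab p) (hL : ∀ i j, L.entry i j ≤ N)
    (M : Tab (rowShape m)) (hM : ∀ i j, M.entry i j ≤ N)
    (J : Finset ℕ) (hJ : J ∈ Hset p m)
    (T : Tab (shapeH p J))
    (seq : ℕ → Σ q : Shape, Tab q)
    (hseq0 : seq 0 = ⟨p, L⟩) (hseqm : seq m = ⟨shapeH p J, T⟩)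
    (hins : ∀ l, l < m → IsRowInsert (seq l) (M.entry 0 l) (seq (l + 1)))
    (v : VH p m → ℂ) :
    symSum (PH p m) v
      (fun w => 1 / (L.pw (sfillH p m w) * M.pw (fun c => tfillH p m w c.2)))
    = symSum (PH p m) v
      (fun w => 1 / T.pw (pushH J (sfillH p m w) (tfillH p m w))) := by
  classical
  -- unpack the hypothesis on J
  rw [Hset, Eset, Finset.mem_filter, Finset.mem_powerset] at hJ
  obtain ⟨hJsub, hJm, hJanti⟩ := hJ
  have hq' : Antitone (shapeAdd p.conj J).part := hJanti
  -- the enumeration of J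
  set α : Fin m ↪o ℕ := J.orderEmbOfFin hJm with hα
  have hαmem : ∀ k : Fin m, α k ∈ J := fun k => Finset.orderEmbOfFin_mem J hJm k
  have hαmono : StrictMono α := (J.orderEmbOfFin hJm).strictMono
  have hrange : ∀ y ∈ J, ∃ i : Fin m, α i = y := by
    intro y hy
    have h1 := Finset.range_orderEmbOfFin J hJm
    have h2 : y ∈ Set.range (α : Fin m → ℕ) := by rw [hα, h1]; exact hy
    exact h2
  have hαle : ∀ k : Fin m, (k : ℕ) ≤ α k := by
    have key : ∀ t : ℕ, ∀ k : Fin m, (k : ℕ) = t → t ≤ α k := by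
      intro t
      induction t with
      | zero => intro k _; exact Nat.zero_le _
      | succ n ih =>
        intro k hk
        have hn : n < m := by omega
        have h1 := ih ⟨n, hn⟩ rfl
        have hkn : n < (k : ℕ) := by omega
        have h2 : (⟨n, hn⟩ : Fin m) < k := hkn
        have h3 := hαmono h2
        omega
    exact fun k => key (k : ℕ) k rfl
  have hfilter : ∀ k : Fin m, (J.filter (fun z => z < α k)).card = (k : ℕ) := by
    intro k
    have himg : J.filter (fun z => z < α k)
        = (Finset.univ.filter (fun i : Fin m => i < k)).image (fun i => α i) := by
      ext y
      simp only [Finset.mem_filter, Finset.mem_image, Finset.mem_univ, true_and]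
      constructor
      · rintro ⟨hy, hlt⟩
        obtain ⟨i, rfl⟩ := hrange y hy
        exact ⟨i, hαmono.lt_iff_lt.mp hlt, rfl⟩
      · rintro ⟨i, hik, rfl⟩
        exact ⟨hαmem i, hαmono hik⟩
    rw [himg, Finset.card_image_of_injective _ hαmono.injective, fin_filter_card]
  -- cells of the shapes
  have cellsP : ∀ i c : ℕ, ((i, c) ∈ p.cells ↔ i < p.conjPart c) := by
    intro i c
    rw [mem_cells', ← lt_conjPart_iff hpart]
  have cellsLJ : ∀ i c : ℕ,
      ((i, c) ∈ (shapeH p J).cells ↔ i < p.conjPart c + (if c ∈ J then 1 else 0)) := by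
    intro i c
    rw [mem_cells']
    show c < (shapeAdd p.conj J).conjPart i ↔ _
    rw [lt_conjPart_iff hq']
    show i < (if c ∈ J then p.conjPart c + 1 else p.conjPart c) ↔ _
    split_ifs <;> omega
  have hdiff : ∀ i c : ℕ, (i, c) ∈ (shapeH p J).cells → (i, c) ∉ p.cells →
      (c ∈ J ∧ i = p.conjPart c) := by
    intro i c h1 h2
    rw [cellsLJ] at h1
    rw [cellsP] at h2
    by_cases hc : c ∈ J
    · rw [if_pos hc] at h1; exact ⟨hc, by omega⟩
    · rw [if_neg hc] at h1; omega
  -- the box rows of the insertion steps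
  have hKex : ∀ l : Fin m, ∃ K, ∀ i, (seq ((l : ℕ) + 1)).1.part i
      = if i = K then (seq (l : ℕ)).1.part i + 1 else (seq (l : ℕ)).1.part i := by
    intro l
    obtain ⟨k, xx, jj, _, _, _, hBp, _⟩ := hins l l.2
    exact ⟨k, fun i => by rw [hBp]⟩
  choose Kr hKr using hKex
  have hKr' : ∀ l, ∀ (hl : l < m), ∀ i, (seq (l + 1)).1.part i
      = if i = Kr ⟨l, hl⟩ then (seq l).1.part i + 1 else (seq l).1.part i :=
    fun l hl => hKr ⟨l, hl⟩
  have hq0 : (seq 0).1 = p := congrArg Sigma.fst hseq0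
  have hqm : (seq m).1 = shapeH p J := congrArg Sigma.fst hseqm
  -- monotonicity of shapes
  have hmono : ∀ a b, a ≤ b → b ≤ m → ∀ i, (seq a).1.part i ≤ (seq b).1.part i := by
    intro a b hab hbm
    induction b, hab using Nat.le_induction with
    | base => intro i; exact le_rfl
    | succ b hb ih =>
      intro i
      refine (ih (by omega) i).trans ?_
      rw [hKr' b (by omega) i]
      split <;> omega
  -- the boxes are the cells of `λ^J \ λ`
  have hboxJ : ∀ l : Fin m, (seq (l : ℕ)).1.part (Kr l) ∈ J
      ∧ Kr l = p.conjPart ((seq (l : ℕ)).1.part (Kr l)) := by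
    intro l
    have hlm := l.2
    have e1 : (seq ((l : ℕ) + 1)).1.part (Kr l) = (seq (l : ℕ)).1.part (Kr l) + 1 := by
      rw [hKr l (Kr l), if_pos rfl]
    have e2 : (seq ((l : ℕ) + 1)).1.part (Kr l) ≤ (seq m).1.part (Kr l) :=
      hmono _ _ (by omega) le_rfl _
    rw [hqm] at e2
    have h1 : (Kr l, (seq (l : ℕ)).1.part (Kr l)) ∈ (shapeH p J).cells :=
      mem_cells'.mpr (by omega)
    have h3 : p.part (Kr l) ≤ (seq (l : ℕ)).1.part (Kr l) := by
      have h4 := hmono 0 (l : ℕ) (Nat.zero_le _) (by omega) (Kr l)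
      rw [hq0] at h4
      exact h4
    have h2 : (Kr l, (seq (l : ℕ)).1.part (Kr l)) ∉ p.cells := by
      rw [mem_cells']
      omega
    exact hdiff _ _ h1 h2
  -- box columns strictly increase and equal the enumeration of J
  have hcα : ∀ l : Fin m, (seq (l : ℕ)).1.part (Kr l) = α l := by
    have hr0 : (rowShape m).part 0 = m := rfl
    have hsucc : ∀ (l : ℕ) (h1 : l < m) (h2 : l + 1 < m),
        (seq l).1.part (Kr ⟨l, h1⟩) < (seq (l + 1)).1.part (Kr ⟨l + 1, h2⟩) :=
      fun l h1 h2 => bump_lt (hins l h1) (hins (l + 1) h2)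
        (M.row_weak' 0 l (l + 1) (by omega) (by rw [hr0]; omega))
        (hKr' l h1) (hKr' (l + 1) h2)
    have hstep : ∀ a (ha : a < m) b (hb : b < m), a < b →
        (seq a).1.part (Kr ⟨a, ha⟩) < (seq b).1.part (Kr ⟨b, hb⟩) := by
      intro a ha b hb hab
      have hab' : a + 1 ≤ b := hab
      induction b, hab' using Nat.le_induction with
      | base => exact hsucc a ha hb
      | succ b hb' ih => exact lt_trans (ih (by omega) (by omega)) (hsucc b (by omega) hb)
    have hstrict : StrictMono (fun l : Fin m => (seq (l : ℕ)).1.part (Kr l)) := by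
      intro a b hab
      have := hstep (a : ℕ) a.2 (b : ℕ) b.2 hab
      simpa using this
    have hemb := Finset.orderEmbOfFin_unique' hJm
      (f := OrderEmbedding.ofStrictMono _ hstrict) (fun l => (hboxJ l).1)
    intro l
    exact DFunLike.congr_fun hemb l
  -- claim (a) : entries in row 0 in columns `α k ≥ r`
  have hA : ∀ k : Fin m, r ≤ (k : ℕ) → T.entry 0 (α k) = M.entry 0 (k : ℕ) := by
    have hr0 : (rowShape m).part 0 = m := rfl
    intro k hk
    have hkm := k.2
    have hαk := hαle k
    have hcαk := hcα k
    have hKr0 : Kr k = 0 := by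
      have h1 := (hboxJ k).2
      have h3 : ¬ (0 < p.conjPart ((seq (k : ℕ)).1.part (Kr k))) := by
        rw [lt_conjPart_iff hpart]
        omega
      omega
    have hpart0 : (seq (k : ℕ)).1.part 0 = α k := by rw [← hKr0]; exact hcαk
    have hb : (seq ((k : ℕ) + 1)).1.part 0 = (seq (k : ℕ)).1.part 0 + 1 := by
      rw [hKr k 0, if_pos hKr0.symm]
    have hnew := row0_new (hins k k.2) hb
    rw [hpart0] at hnew
    have hpers : ∀ l, (k : ℕ) + 1 ≤ l → l ≤ m →
        (seq l).2.entry 0 (α k) = M.entry 0 (k : ℕ) := by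
      intro l hl1 hl2
      induction l, hl1 using Nat.le_induction with
      | base => exact hnew
      | succ l hl ih =>
        have hih := ih (by omega)
        have hWl : M.entry 0 (k : ℕ) ≤ M.entry 0 l :=
          M.row_weak' 0 (k : ℕ) l (by omega) (by rw [hr0]; omega)
        have hlt : α k < (seq l).1.part 0 := by
          have e3 := hmono ((k : ℕ) + 1) l (by omega) (by omega) 0
          omega
        have hpre := row0_preserve (hins l (by omega)) hlt (by rw [hih]; exact hWl)
        rw [hpre, hih]
    have hfin := hpers m (by omega) le_rfl
    rw [hseqm] at hfin
    exact hfin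
  -- claim (b) : entries in column 0 below row `λ'₂`
  have hcα' : ∀ l (hl : l < m), (seq l).1.part (Kr ⟨l, hl⟩) = α ⟨l, hl⟩ :=
    fun l hl => hcα ⟨l, hl⟩
  have hboxJ' : ∀ l (hl : l < m), (seq l).1.part (Kr ⟨l, hl⟩) ∈ J :=
    fun l hl => (hboxJ ⟨l, hl⟩).1
  have hB0 : ∀ i, p.conjPart 1 ≤ i → i < p.conjPart 0 →
      T.entry (i + (if 0 ∈ J then 1 else 0)) 0 = L.entry i 0 := by
    intro i hi1 hi2
    by_cases h0J : 0 ∈ J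
    · rw [if_pos h0J]
      have hα0 : α ⟨0, hm⟩ = 0 := by
        obtain ⟨i0, hi0⟩ := hrange 0 h0J
        have h1 : α ⟨0, hm⟩ ≤ α i0 := hαmono.monotone (Nat.zero_le _)
        omega
      have hc0 : (seq 0).1.part (Kr ⟨0, hm⟩) = 0 := by
        have := hcα' 0 hm
        omega
      have hKr0' : Kr ⟨0, hm⟩ = p.conjPart 0 := by
        have h1 := (hboxJ ⟨0, hm⟩).2
        have h2 := hcα' 0 hm
        rw [hc0] at h1
        exact h1
      obtain ⟨l₀, hl₀K, hl₀0, hpre, hshift⟩ :=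
        col0_shift (hins 0 hm) (hKr' 0 hm) hc0
      have hl₀le : l₀ ≤ p.conjPart 1 := by
        rcases hl₀0 with h | h
        · omega
        · rw [hq0] at h
          have h6 : l₀ - 1 < p.conjPart 1 := (lt_conjPart_iff hpart).mpr (by omega)
          omega
      have hs1 : (seq 1).2.entry (i + 1) 0 = L.entry i 0 := by
        have h7 := hshift i (by omega) (by omega)
        rw [hseq0] at h7
        exact h7
      have hpers : ∀ l, 1 ≤ l → l ≤ m → (seq l).2.entry (i + 1) 0 = L.entry i 0 := by
        intro l h1 h2
        induction l, h1 using Nat.le_induction with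
        | base => exact hs1
        | succ l hl ih =>
          have hih := ih (by omega)
          have hlm : l < m := by omega
          have hcl : 1 ≤ (seq l).1.part (Kr ⟨l, hlm⟩) := by
            have h8 := hcα' l hlm
            have h9 : α ⟨0, hm⟩ < α ⟨l, hlm⟩ := hαmono (show (0 : ℕ) < l by omega)
            omega
          have h10 := col0_preserve (hins l hlm) (hKr' l hlm) hcl (i + 1)
          rw [h10, hih]
      have hfin := hpers m (by omega) le_rfl
      rw [hseqm] at hfin
      exact hfin
    · rw [if_neg h0J, Nat.add_zero]
      have hpers : ∀ l, l ≤ m → (seq l).2.entry i 0 = L.entry i 0 := by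
        intro l h2
        induction l with
        | zero => rw [hseq0]
        | succ l ih =>
          have hih := ih (by omega)
          have hlm : l < m := by omega
          have hcl : 1 ≤ (seq l).1.part (Kr ⟨l, hlm⟩) := by
            have h8 := hboxJ' l hlm
            rcases Nat.eq_zero_or_pos ((seq l).1.part (Kr ⟨l, hlm⟩)) with h9 | h9
            · rw [h9] at h8; exact absurd h8 h0J
            · exact h9
          have h10 := col0_preserve (hins l hlm) (hKr' l hlm) hcl i
          rw [h10, hih]
      have hfin := hpers m le_rfl
      rw [hseqm] at hfin
      exact hfin
  -- the entry multiset identity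
  have hcount : ∀ n, ((shapeH p J).cells.filter (fun c => T.entry c.1 c.2 = n)).card
      = (p.cells.filter (fun c => L.entry c.1 c.2 = n)).card
        + ((Finset.range m).filter (fun l => M.entry 0 l = n)).card := by
    have hchain : ∀ l, l ≤ m → entryM (seq l)
        = ((Finset.range l).val.map (fun i => M.entry 0 i)) + entryM (seq 0) := by
      intro l hl
      induction l with
      | zero => simp
      | succ l ih =>
        rw [entryM_insert (hins l (by omega)), ih (by omega)]
        have e0 : (Finset.range (l + 1)).val = l ::ₘ (Finset.range l).val := by
          rw [Finset.range_add_one, Finset.insert_val_of_notMem (by simp)]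
        rw [e0, Multiset.map_cons, Multiset.cons_add]
    have hm' := hchain m le_rfl
    rw [hseq0, hseqm] at hm'
    intro n
    have h1 := congrArg (Multiset.count n) hm'
    rw [Multiset.count_add] at h1
    have e1 : Multiset.count n (entryM (⟨shapeH p J, T⟩ : Σ q : Shape, Tab q))
        = ((shapeH p J).cells.filter (fun c => T.entry c.1 c.2 = n)).card :=
      count_map_finset _ _ n
    have e2 : Multiset.count n (entryM (⟨p, L⟩ : Σ q : Shape, Tab q))
        = (p.cells.filter (fun c => L.entry c.1 c.2 = n)).card :=
      count_map_finset _ _ n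
    have e3 : Multiset.count n ((Finset.range m).val.map (fun i => M.entry 0 i))
        = ((Finset.range m).filter (fun l => M.entry 0 l = n)).card :=
      count_map_finset _ _ n
    omega
  -- the variable-to-cell correspondence φ
  set φ : VH p m → ℕ × ℕ := Sum.elim
      (fun c : {c : ℕ × ℕ // c ∈ p.cells} => (c.1.1 + (if c.1.2 ∈ J then 1 else 0), c.1.2))
      (fun k : Fin m => (0, α k)) with hφ
  have hφmem : ∀ x : VH p m, φ x ∈ (shapeH p J).cells := by
    rintro (c | k)
    · have hc : c.1.1 < p.conjPart c.1.2 := (cellsP c.1.1 c.1.2).mp c.2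
      show (c.1.1 + (if c.1.2 ∈ J then 1 else 0), c.1.2) ∈ _
      rw [cellsLJ]
      split_ifs <;> omega
    · show (0, α k) ∈ _
      rw [cellsLJ, if_pos (hαmem k)]
      omega
  have hφinj : Function.Injective φ := by
    rintro (c1 | k1) (c2 | k2) h
    · simp only [hφ, Sum.elim_inl, Prod.mk.injEq] at h
      obtain ⟨h1, h2⟩ := h
      rw [h2] at h1
      have h3 : c1.1.1 = c2.1.1 := by omega
      exact congrArg Sum.inl (Subtype.ext (Prod.ext h3 h2))
    · exfalso
      simp only [hφ, Sum.elim_inl, Sum.elim_inr, Prod.mk.injEq] at h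
      obtain ⟨h1, h2⟩ := h
      rw [h2, if_pos (hαmem k2)] at h1
      omega
    · exfalso
      simp only [hφ, Sum.elim_inl, Sum.elim_inr, Prod.mk.injEq] at h
      obtain ⟨h1, h2⟩ := h
      rw [← h2, if_pos (hαmem k1)] at h1
      omega
    · simp only [hφ, Sum.elim_inr, Prod.mk.injEq] at h
      exact congrArg Sum.inr (hαmono.injective h.2)
  have hφsurj : ∀ b ∈ (shapeH p J).cells, ∃ x : VH p m, φ x = b := by
    rintro ⟨i, c⟩ hb
    rw [cellsLJ] at hb
    by_cases hc : c ∈ J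
    · rw [if_pos hc] at hb
      rcases Nat.eq_zero_or_pos i with rfl | hi
      · obtain ⟨k, hk⟩ := hrange c hc
        exact ⟨Sum.inr k, by simp only [hφ, Sum.elim_inr, hk]⟩
      · have hmem2 : (i - 1, c) ∈ p.cells := (cellsP (i - 1) c).mpr (by omega)
        refine ⟨Sum.inl ⟨(i - 1, c), hmem2⟩, ?_⟩
        show ((i - 1) + (if c ∈ J then 1 else 0), c) = (i, c)
        rw [if_pos hc]
        exact congrArg (fun z => (z, c)) (by omega)
    · rw [if_neg hc] at hb
      have hmem2 : (i, c) ∈ p.cells := (cellsP i c).mpr (by omega)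
      refine ⟨Sum.inl ⟨(i, c), hmem2⟩, ?_⟩
      show (i + (if c ∈ J then 1 else 0), c) = (i, c)
      rw [if_neg hc]
      exact congrArg (fun z => (z, c)) (by omega)
  have hφval : ∀ (w : VH p m → ℂ) (x : VH p m),
      pushH J (sfillH p m w) (tfillH p m w) (φ x) = w x := by
    intro w x
    rcases x with ⟨⟨i, cc⟩, hcmem⟩ | k
    · show pushH J (sfillH p m w) (tfillH p m w)
        (i + (if cc ∈ J then 1 else 0), cc) = w (Sum.inl ⟨(i, cc), hcmem⟩)
      by_cases hc : cc ∈ J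
      · rw [if_pos hc]
        show (if cc ∈ J then
            (if i + 1 = 0 then tfillH p m w ((J.filter (· < cc)).card)
             else sfillH p m w (i + 1 - 1, cc))
          else sfillH p m w (i + 1, cc)) = _
        rw [if_pos hc, if_neg (by omega : ¬ (i + 1 = 0))]
        show (if h : ((i + 1 - 1 : ℕ), cc) ∈ p.cells then
            w (Sum.inl ⟨(i + 1 - 1, cc), h⟩) else 0) = _
        rw [dif_pos (show ((i + 1 - 1 : ℕ), cc) ∈ p.cells from hcmem)]
        exact congrArg w (congrArg Sum.inl (Subtype.ext (by simp)))
      · rw [if_neg hc]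
        show (if cc ∈ J then
            (if i = 0 then tfillH p m w ((J.filter (· < cc)).card)
             else sfillH p m w (i - 1, cc))
          else sfillH p m w (i, cc)) = _
        rw [if_neg hc]
        show (if h : ((i : ℕ), cc) ∈ p.cells then w (Sum.inl ⟨(i, cc), h⟩) else 0) = _
        rw [dif_pos hcmem]
    · show pushH J (sfillH p m w) (tfillH p m w) (0, α k) = w (Sum.inr k)
      show (if α k ∈ J then
          (if (0 : ℕ) = 0 then tfillH p m w ((J.filter (· < α k)).card)
           else sfillH p m w (0 - 1, α k))
        else sfillH p m w (0, α k)) = _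
      rw [if_pos (hαmem k), if_pos rfl]
      have hfk : (J.filter (· < α k)).card = (k : ℕ) := hfilter k
      rw [hfk]
      show (if h : (k : ℕ) < m then w (Sum.inr ⟨(k : ℕ), h⟩) else 0) = _
      rw [dif_pos k.2]
  -- the two entry functions on variables
  set ET : VH p m → ℕ := fun x => T.entry (φ x).1 (φ x).2 with hET
  set EL : VH p m → ℕ := Sum.elim
      (fun c : {c : ℕ × ℕ // c ∈ p.cells} => L.entry c.1.1 c.1.2)
      (fun k : Fin m => M.entry 0 (k : ℕ)) with hEL
  have hfix : ∀ x : VH p m, ¬ PH p m x → ET x = EL x := by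
    rintro (c | k) hP
    · simp only [PH, Sum.elim_inl] at hP
      push_neg at hP
      obtain ⟨h1, h2⟩ := hP
      obtain ⟨⟨i, cc⟩, hcm⟩ := c
      have h1' : cc = 0 := h1
      subst h1'
      have h3 : i < p.conjPart 0 := (cellsP i 0).mp hcm
      have h4 := hB0 i (by exact h2) h3
      exact h4
    · simp only [PH, Sum.elim_inr] at hP
      push_neg at hP
      have h4 := hA k (by omega)
      exact h4
  have hcnt : ∀ n, (Finset.univ.filter fun x : VH p m => ET x = n).card
      = (Finset.univ.filter fun x : VH p m => EL x = n).card := by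
    intro n
    have hTside : (Finset.univ.filter fun x : VH p m => ET x = n).card
        = ((shapeH p J).cells.filter (fun c => T.entry c.1 c.2 = n)).card := by
      apply Finset.card_bij (fun x _ => φ x)
      · intro a ha
        rw [Finset.mem_filter] at ha ⊢
        exact ⟨hφmem a, ha.2⟩
      · intro a _ b _ hab
        exact hφinj hab
      · intro b hb
        rw [Finset.mem_filter] at hb
        obtain ⟨x, rfl⟩ := hφsurj b hb.1
        exact ⟨x, Finset.mem_filter.mpr ⟨Finset.mem_univ _, hb.2⟩, rfl⟩
    have hLsub : (Finset.univ.filter fun c : {c : ℕ × ℕ // c ∈ p.cells} =>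
        L.entry c.1.1 c.1.2 = n).card
        = (p.cells.filter (fun c => L.entry c.1 c.2 = n)).card := by
      apply Finset.card_bij (fun c _ => c.1)
      · intro a ha
        rw [Finset.mem_filter] at ha ⊢
        exact ⟨a.2, ha.2⟩
      · intro a _ b _ hab
        exact Subtype.ext hab
      · intro b hb
        rw [Finset.mem_filter] at hb
        exact ⟨⟨b, hb.1⟩, Finset.mem_filter.mpr ⟨Finset.mem_univ _, hb.2⟩, rfl⟩
    have hLfin : (Finset.univ.filter fun k : Fin m => M.entry 0 (k : ℕ) = n).card
        = ((Finset.range m).filter (fun l => M.entry 0 l = n)).card := by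
      refine Finset.card_bij (fun (k : Fin m) _ => (k : ℕ)) ?_ ?_ ?_
      · intro a ha
        rw [Finset.mem_filter] at ha ⊢
        exact ⟨Finset.mem_range.mpr a.2, ha.2⟩
      · intro a _ b _ hab
        exact Fin.ext hab
      · intro b hb
        rw [Finset.mem_filter, Finset.mem_range] at hb
        exact ⟨⟨b, hb.1⟩, Finset.mem_filter.mpr ⟨Finset.mem_univ _, hb.2⟩, rfl⟩
    have hsplit : (Finset.univ.filter fun x : VH p m => EL x = n)
        = ((Finset.univ.filter fun c : {c : ℕ × ℕ // c ∈ p.cells} =>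
              L.entry c.1.1 c.1.2 = n).map ⟨Sum.inl, Sum.inl_injective⟩)
          ∪ ((Finset.univ.filter fun k : Fin m => M.entry 0 (k : ℕ) = n).map
              ⟨Sum.inr, Sum.inr_injective⟩) := by
      ext x
      rcases x with c | k <;>
        simp [hEL]
    have hdisj : Disjoint
        ((Finset.univ.filter fun c : {c : ℕ × ℕ // c ∈ p.cells} =>
            L.entry c.1.1 c.1.2 = n).map ⟨Sum.inl, Sum.inl_injective⟩)
        ((Finset.univ.filter fun k : Fin m => M.entry 0 (k : ℕ) = n).map
            ⟨Sum.inr, Sum.inr_injective⟩) := by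
      rw [Finset.disjoint_left]
      intro x hx hy
      rw [Finset.mem_map] at hx hy
      obtain ⟨a, _, rfl⟩ := hx
      obtain ⟨b, _, hb⟩ := hy
      simp at hb
    rw [hTside, hsplit, Finset.card_union_of_disjoint hdisj, Finset.card_map,
      Finset.card_map, hLsub, hLfin]
    exact hcount n
  obtain ⟨τ, hτ1, hτ2⟩ := exists_perm_comp (PH p m) ET EL hfix hcnt
  have hτinv : ∀ x, ¬ PH p m x → τ.symm x = x := by
    intro x hx
    have h9 : τ (τ.symm x) = τ x := by rw [hτ1 x hx, Equiv.apply_symm_apply]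
    exact τ.injective h9
  -- product identities
  have hrowc : ∀ i c : ℕ, ((i, c) ∈ (rowShape m).cells ↔ i = 0 ∧ c < m) := by
    intro i c
    rw [mem_cells']
    show c < (if i = 0 then m else 0) ↔ _
    split_ifs with h <;> simp [h] <;> omega
  have hprodL : ∀ w : VH p m → ℂ,
      L.pw (sfillH p m w) * M.pw (fun c => tfillH p m w c.2)
      = ∏ x : VH p m, (EL x : ℂ) ^ w x := by
    intro w
    rw [Fintype.prod_sum_type]
    congr 1
    · rw [Tab.pw, ← Finset.prod_coe_sort p.cells
        (fun c => (L.entry c.1 c.2 : ℂ) ^ sfillH p m w c)]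
      apply Finset.prod_congr rfl
      intro c _
      have e : sfillH p m w c.1 = w (Sum.inl c) := by
        show (if h : (c : ℕ × ℕ) ∈ p.cells then w (Sum.inl ⟨c.1, h⟩) else 0) = _
        rw [dif_pos c.2]
      rw [e]
      rfl
    · rw [Tab.pw]
      refine Finset.prod_bij
        (fun (c : ℕ × ℕ) (hc : c ∈ (rowShape m).cells) =>
          (⟨c.2, ((hrowc c.1 c.2).mp hc).2⟩ : Fin m)) ?_ ?_ ?_ ?_
      · intro a _
        exact Finset.mem_univ _
      · intro a ha b hb hab
        have ha' := (hrowc a.1 a.2).mp ha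
        have hb' := (hrowc b.1 b.2).mp hb
        rw [Fin.mk.injEq] at hab
        exact Prod.ext (ha'.1.trans hb'.1.symm) hab
      · intro b _
        exact ⟨(0, (b : ℕ)), (hrowc 0 (b : ℕ)).mpr ⟨rfl, b.2⟩, Fin.ext rfl⟩
      · intro a ha
        obtain ⟨a1, a2⟩ := a
        obtain ⟨rfl, ha2⟩ := (hrowc a1 a2).mp ha
        have e : tfillH p m w a2 = w (Sum.inr ⟨a2, ha2⟩) := by
          show (if h : a2 < m then w (Sum.inr ⟨a2, h⟩) else 0) = _
          rw [dif_pos ha2]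
        show (M.entry 0 a2 : ℂ) ^ tfillH p m w a2 = _
        rw [e]
        rfl
  have hprodT : ∀ w : VH p m → ℂ,
      T.pw (pushH J (sfillH p m w) (tfillH p m w))
      = ∏ x : VH p m, (ET x : ℂ) ^ w x := by
    intro w
    rw [Tab.pw]
    refine (Finset.prod_bij (fun (x : VH p m) (_ : x ∈ Finset.univ) => φ x)
      ?_ ?_ ?_ ?_).symm
    · intro a _
      exact hφmem a
    · intro a _ b _ h
      exact hφinj h
    · intro b hb
      obtain ⟨x, hx⟩ := hφsurj b hb
      exact ⟨x, Finset.mem_univ _, hx⟩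
    · intro a _
      rw [hφval w a]
  -- final assembly
  have e1 : (fun w : VH p m → ℂ =>
      1 / (L.pw (sfillH p m w) * M.pw (fun c => tfillH p m w c.2)))
      = fun w => 1 / ∏ x : VH p m, (EL x : ℂ) ^ w x :=
    funext fun w => by rw [hprodL w]
  have e2 : (fun w : VH p m → ℂ => 1 / T.pw (pushH J (sfillH p m w) (tfillH p m w)))
      = fun w => (fun w' => 1 / ∏ x : VH p m, (EL x : ℂ) ^ w' x) (w ∘ τ.symm) := by
    funext w
    have h8 : ∏ x : VH p m, (ET x : ℂ) ^ w x
        = ∏ x : VH p m, (EL x : ℂ) ^ (w ∘ τ.symm) x := by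
      rw [← Equiv.prod_comp τ (fun y => (EL y : ℂ) ^ (w ∘ τ.symm) y)]
      apply Finset.prod_congr rfl
      intro x _
      simp only [Function.comp_apply, Equiv.symm_apply_apply]
      rw [← hτ2 x]
    rw [hprodT w, h8]
  rw [e1, e2]
  exact (symSum_comp (PH p m) v _ τ.symm hτinv).symm
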